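/- arXiv:1312.1113 — 2 statements merged into one kernel-verified Lean document; each statement's English description precedes it below -/
import Mathlib

section
/- Phragmén–Lindelöf argument used in Hardy's proof: if F is entire on ℂ, |F(z)| ≤ C e^{a|z|²} for all z ∈ ℂ, and |F(x)| ≤ C e^{-a x²} for all real x, then F(z) = c·e^{-a z²} for some constant c. -/
open Real Complex Filter Asymptotics Topology Bornology

lemma hasDerivAt_conj_conj {f : ℂ → ℂ} {c w : ℂ}
    (h : HasDerivAt f c ((starRingEnd ℂ) w)) :
    HasDerivAt (fun z => (starRingEnd ℂ) (f ((starRingEnd ℂ) z))) ((starRingEnd ℂ) c) w := by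
  rw [hasDerivAt_iff_isLittleO] at h ⊢
  have hc : Tendsto (starRingEnd ℂ) (𝓝 w) (𝓝 ((starRingEnd ℂ) w)) :=
    Complex.continuous_conj.continuousAt
  have H := h.comp_tendsto hc
  rw [← isLittleO_norm_norm] at H ⊢
  refine H.congr (fun y => ?_) (fun y => ?_)
  · simp only [Function.comp_apply, smul_eq_mul]
    rw [show (starRingEnd ℂ) (f ((starRingEnd ℂ) y)) - (starRingEnd ℂ) (f ((starRingEnd ℂ) w)) -
        (y - w) * (starRingEnd ℂ) c =
        (starRingEnd ℂ) (f ((starRingEnd ℂ) y) - f ((starRingEnd ℂ) w) -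
          ((starRingEnd ℂ) y - (starRingEnd ℂ) w) * c) by
      simp only [map_sub, map_mul, Complex.conj_conj]]
    exact (RCLike.norm_conj _).symm
  · simp only [Function.comp_apply]
    rw [← map_sub, RCLike.norm_conj]

lemma differentiable_conj_conj {f : ℂ → ℂ} (hf : Differentiable ℂ f) :
    Differentiable ℂ (fun z => (starRingEnd ℂ) (f ((starRingEnd ℂ) z))) := fun z =>
  (hasDerivAt_conj_conj (hf ((starRingEnd ℂ) z)).hasDerivAt).differentiableAt

lemma sector_bound (F : ℂ → ℂ) (hF : Differentiable ℂ F) (a C : ℝ) (ha : 0 < a) (hC : 0 < C)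
    (hgrow : ∀ z : ℂ, ‖F z‖ ≤ C * Real.exp (a * ‖z‖ ^ 2))
    (hreal : ∀ x : ℝ, ‖F x‖ ≤ C * Real.exp (-a * x ^ 2))
    (θ : ℝ) (hθ0 : 0 < θ) (hθ2 : θ < π / 2) (w : ℂ) (h0 : 0 ≤ w.im) (hwθ : w.im ≤ θ) :
    ‖F (Complex.exp w) * Complex.exp
      ((↑a + ↑(a * Real.cos θ / Real.sin θ) * Complex.I) * Complex.exp w ^ 2)‖ ≤ C := by
  have hsin : 0 < Real.sin θ :=
    Real.sin_pos_of_pos_of_lt_pi hθ0 (by linarith [Real.pi_pos])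
  set b : ℝ := a * Real.cos θ / Real.sin θ with hb
  set l : ℂ := (a : ℂ) + (b : ℂ) * Complex.I with hl
  set f : ℂ → ℂ := fun u => F (Complex.exp u) * Complex.exp (l * Complex.exp u ^ 2) with hfdef
  have normf : ∀ u : ℂ, ‖f u‖ = ‖F (Complex.exp u)‖ * Real.exp ((l * Complex.exp u ^ 2).re) := by
    intro u
    rw [norm_mul, Complex.norm_exp]
  have nexp : ∀ u : ℂ, ‖Complex.exp u‖ ^ 2 = Real.exp (2 * u.re) := by
    intro u
    rw [Complex.norm_exp, ← Real.exp_nat_mul]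
    norm_num [mul_comm]
  show ‖f w‖ ≤ C
  refine PhragmenLindelof.horizontal_strip (a := 0) (b := θ) ?_ ?_ ?_ ?_ h0 hwθ
  · refine Differentiable.diffContOnCl ?_
    exact (hF.comp Complex.differentiable_exp).mul
      (((Complex.differentiable_exp.pow 2).const_mul l).cexp)
  · refine ⟨2, ?_, a + ‖l‖, ?_⟩
    · rw [sub_zero, lt_div_iff₀ hθ0]; linarith
    · refine IsBigO.of_bound C (Eventually.of_forall fun u => ?_)
      rw [normf u]
      have h1 : (l * Complex.exp u ^ 2).re ≤ ‖l‖ * Real.exp (2 * u.re) := by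
        calc (l * Complex.exp u ^ 2).re ≤ ‖l * Complex.exp u ^ 2‖ :=
              Complex.re_le_norm _
          _ = ‖l‖ * ‖Complex.exp u‖ ^ 2 := by
              rw [norm_mul, norm_pow]
          _ = ‖l‖ * Real.exp (2 * u.re) := by rw [nexp]
      have h2 : ‖F (Complex.exp u)‖ ≤ C * Real.exp (a * Real.exp (2 * u.re)) := by
        have := hgrow (Complex.exp u); rwa [nexp] at this
      have h3 : Real.exp (2 * u.re) ≤ Real.exp (2 * |u.re|) :=
        Real.exp_le_exp.2 (by have := le_abs_self u.re; linarith)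
      calc ‖F (Complex.exp u)‖ * Real.exp ((l * Complex.exp u ^ 2).re)
          ≤ (C * Real.exp (a * Real.exp (2 * u.re))) * Real.exp (‖l‖ * Real.exp (2 * u.re)) := by
            refine mul_le_mul h2 (Real.exp_le_exp.2 h1) (Real.exp_pos _).le ?_
            positivity
        _ = C * Real.exp ((a + ‖l‖) * Real.exp (2 * u.re)) := by
            rw [mul_assoc, ← Real.exp_add]; ring_nf
        _ ≤ C * ‖Real.exp ((a + ‖l‖) * Real.exp (2 * |u.re|))‖ := by
            rw [Real.norm_eq_abs, abs_of_pos (Real.exp_pos _)]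
            have hal : (0:ℝ) ≤ a + ‖l‖ := by positivity
            gcongr
  · -- boundary im = 0
    intro u hu
    have hu' : u = (u.re : ℂ) := Complex.ext rfl (by simp [hu])
    rw [normf]
    set t : ℝ := Real.exp u.re with ht
    have het : Complex.exp u = (t : ℂ) := by rw [hu', ← Complex.ofReal_exp]
    have hre : (l * Complex.exp u ^ 2).re = a * t ^ 2 := by
      rw [het]
      have h4 : l * (t : ℂ) ^ 2 = ((a * t ^ 2 : ℝ) : ℂ) + ((b * t ^ 2 : ℝ) : ℂ) * Complex.I := by
        rw [hl]; push_cast; ring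
      rw [h4]
      simp [← Complex.ofReal_pow]
    rw [hre, het]
    calc ‖F (t : ℂ)‖ * Real.exp (a * t ^ 2)
        ≤ (C * Real.exp (-a * t ^ 2)) * Real.exp (a * t ^ 2) := by
          exact mul_le_mul_of_nonneg_right (hreal t) (Real.exp_pos _).le
      _ = C := by rw [mul_assoc, ← Real.exp_add]; ring_nf; simp
  · -- boundary im = θ
    intro u hu
    rw [normf]
    have hre : (l * Complex.exp u ^ 2).re = -a * Real.exp (2 * u.re) := by
      have h2 : Complex.exp u ^ 2 = Complex.exp (2 * u) := by
        rw [← Complex.exp_nat_mul]; norm_num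
      have hre2 : (Complex.exp (2 * u)).re = Real.exp (2 * u.re) * Real.cos (2 * θ) := by
        rw [Complex.exp_re]; simp [hu, mul_comm]
      have him2 : (Complex.exp (2 * u)).im = Real.exp (2 * u.re) * Real.sin (2 * θ) := by
        rw [Complex.exp_im]; simp [hu, mul_comm]
      rw [h2, Complex.mul_re, hre2, him2]
      have hlre : l.re = a := by simp [hl]
      have hlim : l.im = b := by simp [hl]
      rw [hlre, hlim, hb]
      have hcos2 : Real.cos (2 * θ) = 2 * Real.cos θ ^ 2 - 1 := Real.cos_two_mul θ
      have hsin2 : Real.sin (2 * θ) = 2 * Real.sin θ * Real.cos θ := Real.sin_two_mul θ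
      rw [hcos2, hsin2]
      field_simp
      ring
    rw [hre]
    calc ‖F (Complex.exp u)‖ * Real.exp (-a * Real.exp (2 * u.re))
        ≤ (C * Real.exp (a * Real.exp (2 * u.re))) * Real.exp (-a * Real.exp (2 * u.re)) := by
          refine mul_le_mul_of_nonneg_right ?_ (Real.exp_pos _).le
          have := hgrow (Complex.exp u); rwa [nexp] at this
      _ = C := by rw [mul_assoc, ← Real.exp_add]; ring_nf; simp

lemma quadrant_bound (F : ℂ → ℂ) (hF : Differentiable ℂ F) (a C : ℝ) (ha : 0 < a) (hC : 0 < C)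
    (hgrow : ∀ z : ℂ, ‖F z‖ ≤ C * Real.exp (a * ‖z‖ ^ 2))
    (hreal : ∀ x : ℝ, ‖F x‖ ≤ C * Real.exp (-a * x ^ 2))
    (z : ℂ) (hre : 0 ≤ z.re) (him : 0 ≤ z.im) :
    ‖F z * Complex.exp ((a : ℂ) * z ^ 2)‖ ≤ C := by
  rcases eq_or_lt_of_le him with him0 | him
  · -- real axis
    have hz : z = (z.re : ℂ) := Complex.ext rfl (by simp [← him0])
    rw [hz]
    have h4 : (a : ℂ) * (z.re : ℂ) ^ 2 = ((a * z.re ^ 2 : ℝ) : ℂ) := by push_cast; ring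
    rw [norm_mul, h4, Complex.norm_exp, Complex.ofReal_re]
    calc ‖F (z.re : ℂ)‖ * Real.exp (a * z.re ^ 2)
        ≤ (C * Real.exp (-a * z.re ^ 2)) * Real.exp (a * z.re ^ 2) :=
          mul_le_mul_of_nonneg_right (hreal z.re) (Real.exp_pos _).le
      _ = C := by rw [mul_assoc, ← Real.exp_add]; simp
  rcases eq_or_lt_of_le hre with hre0 | hre
  · -- imaginary axis
    have hre2 : ((a : ℂ) * z ^ 2).re = -(a * z.im ^ 2) := by
      have h5 : (z ^ 2).re = z.re * z.re - z.im * z.im := by rw [sq, Complex.mul_re]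
      rw [Complex.mul_re, Complex.ofReal_re, Complex.ofReal_im, h5, ← hre0]; ring
    rw [norm_mul, Complex.norm_exp, hre2]
    have hn : ‖z‖ ^ 2 = z.im ^ 2 := by
      rw [Complex.sq_norm, Complex.normSq_apply, ← hre0]; ring
    calc ‖F z‖ * Real.exp (-(a * z.im ^ 2))
        ≤ (C * Real.exp (a * z.im ^ 2)) * Real.exp (-(a * z.im ^ 2)) := by
          refine mul_le_mul_of_nonneg_right ?_ (Real.exp_pos _).le
          have := hgrow z; rwa [hn] at this
      _ = C := by rw [mul_assoc, ← Real.exp_add]; simp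
  · -- open quadrant
    have hz0 : z ≠ 0 := fun h => by simp [h] at hre
    set φ := Complex.arg z with hφ
    have hφ0 : 0 ≤ φ := Complex.arg_nonneg_iff.2 him.le
    have hφ2 : φ < π / 2 := Complex.arg_lt_pi_div_two_iff.2 (Or.inl hre)
    have hT : 0 < a * (z ^ 2).im := by
      have : (z ^ 2).im = 2 * z.re * z.im := by rw [sq, Complex.mul_im]; ring
      rw [this]; positivity
    set T := a * (z ^ 2).im with hTdef
    have key : ∀ ε : ℝ, 0 < ε → ‖F z * Complex.exp ((a : ℂ) * z ^ 2)‖ ≤ C * Real.exp ε := by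
      intro ε hε
      set θ := max (Real.arctan (T / ε)) ((φ + π / 2) / 2) with hθdef
      have hθ0 : 0 < θ := lt_of_lt_of_le (by linarith [Real.pi_pos]) (le_max_right _ _)
      have hθ2 : θ < π / 2 :=
        max_lt (Real.arctan_lt_pi_div_two _) (by linarith)
      have hφθ : φ ≤ θ := le_trans (by linarith) (le_max_right _ _)
      have hsin : 0 < Real.sin θ := Real.sin_pos_of_pos_of_lt_pi hθ0 (by linarith [Real.pi_pos])
      have hw : Complex.exp (Complex.log z) = z := Complex.exp_log hz0
      have him' : (Complex.log z).im = φ := Complex.log_im z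
      have hsec := sector_bound F hF a C ha hC hgrow hreal θ hθ0 hθ2 (Complex.log z)
        (by rw [him']; exact hφ0) (by rw [him']; exact hφθ)
      rw [hw] at hsec
      set b := a * Real.cos θ / Real.sin θ with hb
      have hbpos : 0 < b := by
        have hcos : 0 < Real.cos θ := Real.cos_pos_of_mem_Ioo ⟨by linarith, hθ2⟩
        positivity
      have hsplit : (a : ℂ) * z ^ 2 =
          ((a : ℂ) + (b : ℂ) * Complex.I) * z ^ 2 + (-(b : ℂ) * Complex.I) * z ^ 2 := by ring
      have hnorm2 : ‖Complex.exp ((-(b : ℂ) * Complex.I) * z ^ 2)‖ = Real.exp (b * (z ^ 2).im) := by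
        rw [Complex.norm_exp]
        congr 1
        have : (-(b : ℂ) * Complex.I) * z ^ 2 = -((b:ℂ) * (Complex.I * z ^ 2)) := by ring
        rw [this, Complex.neg_re]
        rw [show (b:ℂ) * (Complex.I * z^2) = (b:ℝ) • (Complex.I * z^2) by
          rw [Complex.real_smul]]
        rw [Complex.smul_re, Complex.mul_re]
        simp
      have hbT : b * (z ^ 2).im ≤ ε := by
        have htan : T / ε ≤ Real.tan θ := by
          have h1 : Real.tan (Real.arctan (T / ε)) = T / ε := Real.tan_arctan _
          rw [← h1]
          refine Real.strictMonoOn_tan.monotoneOn ?_ ?_ (le_max_left _ _)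
          · exact ⟨(Real.arctan_mem_Ioo _).1, (Real.arctan_mem_Ioo _).2⟩
          · exact ⟨by linarith [Real.pi_pos], hθ2⟩
        have htanpos : 0 < Real.tan θ := lt_of_lt_of_le (by positivity) htan
        have hbtan : b * (z ^ 2).im = T / Real.tan θ := by
          rw [hb, hTdef, Real.tan_eq_sin_div_cos]
          field_simp
        rw [hbtan]
        calc T / Real.tan θ ≤ T / (T / ε) := by
              exact div_le_div_of_nonneg_left hT.le (by positivity) htan
          _ = ε := by field_simp
      calc ‖F z * Complex.exp ((a : ℂ) * z ^ 2)‖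
          = ‖F z * Complex.exp (((a : ℂ) + (b : ℂ) * Complex.I) * z ^ 2)‖ *
              ‖Complex.exp ((-(b : ℂ) * Complex.I) * z ^ 2)‖ := by
            rw [← norm_mul, hsplit, Complex.exp_add]; ring_nf
        _ ≤ C * Real.exp (b * (z ^ 2).im) := by
            rw [hnorm2]
            exact mul_le_mul_of_nonneg_right hsec (Real.exp_pos _).le
        _ ≤ C * Real.exp ε := by gcongr
    have htend : Tendsto (fun ε : ℝ => C * Real.exp ε) (𝓝[>] 0) (𝓝 C) := by
      have h1 : Tendsto (fun ε : ℝ => C * Real.exp ε) (𝓝 0) (𝓝 (C * Real.exp 0)) :=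
        ((Real.continuous_exp.tendsto 0).const_mul C)
      simpa using h1.mono_left nhdsWithin_le_nhds
    refine ge_of_tendsto htend ?_
    exact eventually_mem_nhdsWithin.mono fun ε hε => key ε hε
/-- Phragmén–Lindelöf argument used in Hardy's proof: if `F` is entire,
`|F(z)| ≤ C e^{a|z|²}` for all `z`, and `|F(x)| ≤ C e^{-ax²}` for real `x`,
then `F(z) = c e^{-az²}` for some constant `c`. -/
theorem phragmen_lindelof_hardy (F : ℂ → ℂ) (hF : Differentiable ℂ F)
    (a C : ℝ) (ha : 0 < a) (hC : 0 < C)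
    (hgrow : ∀ z : ℂ, ‖F z‖ ≤ C * Real.exp (a * ‖z‖ ^ 2))
    (hreal : ∀ x : ℝ, ‖F x‖ ≤ C * Real.exp (-a * x ^ 2)) :
    ∃ c : ℂ, ∀ z : ℂ, F z = c * Complex.exp (-(a : ℂ) * z ^ 2) := by
  -- hypotheses for the transformed functions
  have hFneg : Differentiable ℂ (fun w => F (-w)) := hF.comp differentiable_neg
  have hgrow_neg : ∀ z : ℂ, ‖F (-z)‖ ≤ C * Real.exp (a * ‖z‖ ^ 2) := fun z => by
    simpa using hgrow (-z)
  have hreal_neg : ∀ x : ℝ, ‖F (-(x : ℂ))‖ ≤ C * Real.exp (-a * x ^ 2) := fun x => by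
    have := hreal (-x); push_cast at this; simpa using this
  have hF2 : Differentiable ℂ (fun w => (starRingEnd ℂ) (F ((starRingEnd ℂ) w))) :=
    differentiable_conj_conj hF
  have hgrow2 : ∀ z : ℂ, ‖(starRingEnd ℂ) (F ((starRingEnd ℂ) z))‖ ≤
      C * Real.exp (a * ‖z‖ ^ 2) := fun z => by
    rw [RCLike.norm_conj]
    simpa [RCLike.norm_conj] using hgrow ((starRingEnd ℂ) z)
  have hreal2 : ∀ x : ℝ, ‖(starRingEnd ℂ) (F ((starRingEnd ℂ) (x : ℂ)))‖ ≤
      C * Real.exp (-a * x ^ 2) := fun x => by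
    rw [RCLike.norm_conj, Complex.conj_ofReal]; exact hreal x
  -- the conjugate identity
  have conj_eq : ∀ z : ℂ, (starRingEnd ℂ) (F z) *
      Complex.exp ((a : ℂ) * ((starRingEnd ℂ) z) ^ 2) =
      (starRingEnd ℂ) (F z * Complex.exp ((a : ℂ) * z ^ 2)) := by
    intro z
    rw [map_mul]
    congr 1
    rw [show (a : ℂ) * ((starRingEnd ℂ) z) ^ 2 = (starRingEnd ℂ) ((a : ℂ) * z ^ 2) by
      rw [map_mul, map_pow, Complex.conj_ofReal]]
    exact Complex.exp_conj _
  -- global bound on G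
  have allb : ∀ z : ℂ, ‖F z * Complex.exp ((a : ℂ) * z ^ 2)‖ ≤ C := by
    intro z
    rcases le_total 0 z.re with hre | hre <;> rcases le_total 0 z.im with him | him
    · exact quadrant_bound F hF a C ha hC hgrow hreal z hre him
    · -- re ≥ 0, im ≤ 0 : use conjugation
      have h := quadrant_bound _ hF2 a C ha hC hgrow2
        (fun x => hreal2 x) ((starRingEnd ℂ) z) (by simpa using hre) (by simpa using him)
      simp only [Complex.conj_conj] at h
      rw [conj_eq z, RCLike.norm_conj] at h
      exact h
    · -- re ≤ 0, im ≥ 0 : conjugation and negation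
      have hF3 : Differentiable ℂ (fun w => (starRingEnd ℂ) (F ((starRingEnd ℂ) (-w)))) := by
        simpa [Function.comp_def] using hF2.comp differentiable_neg
      have hgrow3 : ∀ z : ℂ, ‖(starRingEnd ℂ) (F ((starRingEnd ℂ) (-z)))‖ ≤
          C * Real.exp (a * ‖z‖ ^ 2) := fun z => by simpa using hgrow2 (-z)
      have hreal3 : ∀ x : ℝ, ‖(starRingEnd ℂ) (F ((starRingEnd ℂ) (-(x : ℂ))))‖ ≤
          C * Real.exp (-a * x ^ 2) := fun x => by
        rw [RCLike.norm_conj]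
        have := hreal (-x); push_cast at this
        simpa [map_neg, Complex.conj_ofReal] using this
      have h := quadrant_bound _ hF3 a C ha hC hgrow3 (fun x => hreal3 x)
        (-(starRingEnd ℂ) z) (by simpa using hre) (by simpa using him)
      simp only [neg_neg, neg_sq, Complex.conj_conj] at h
      rw [conj_eq z, RCLike.norm_conj] at h
      exact h
    · -- re ≤ 0, im ≤ 0 : use negation
      have h := quadrant_bound _ hFneg a C ha hC
        (fun w => hgrow_neg w) (fun x => hreal_neg x) (-z) (by simpa using hre)
        (by simpa using him)
      simpa using h
  -- Liouville
  have hGdiff : Differentiable ℂ (fun z => F z * Complex.exp ((a : ℂ) * z ^ 2)) :=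
    hF.mul (((differentiable_pow 2).const_mul _).cexp)
  have hbd : IsBounded (Set.range fun z => F z * Complex.exp ((a : ℂ) * z ^ 2)) := by
    refine isBounded_iff_forall_norm_le.2 ⟨C, ?_⟩
    rintro x ⟨z, rfl⟩; exact allb z
  obtain ⟨c, hc⟩ := hGdiff.exists_const_forall_eq_of_bounded hbd
  refine ⟨c, fun z => ?_⟩
  have h := hc z
  rw [show -(a : ℂ) * z ^ 2 = -((a : ℂ) * z ^ 2) by ring, Complex.exp_neg, ← h]
  field_simp
end

section
/- Segal–Bargmann characterization on S¹ (one direction): if h ∈ L²(S¹) and f = h * p_t for t > 0, then f extends to an entire 2π-periodic function on ℂ and ∫_0^{2π} ∫_ℝ |f(x+iy)|² q_{t/2}(y) dy dx < ∞, where q_s(y) = (4πs)^{-1/2} e^{-y²/(4s)} is the Euclidean heat kernel on ℝ. -/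
open MeasureTheory Real Complex
open scoped ENNReal NNReal

lemma summable_exp_absk (c : ℝ) (hc : c < 0) : Summable (fun k : ℤ => rexp (c * |(k : ℝ)|)) := by
  have hgeom : Summable (fun n : ℕ => rexp c ^ n) :=
    summable_geometric_of_lt_one (Real.exp_pos _).le (Real.exp_lt_one_iff.mpr hc)
  apply Summable.of_nat_of_neg
  · apply hgeom.congr
    intro n
    rw [← Real.exp_nat_mul]
    congr 1
    rw [Int.cast_natCast, Nat.abs_cast]; ring
  · apply hgeom.congr
    intro n
    rw [← Real.exp_nat_mul]
    congr 1
    push_cast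
    rw [abs_neg, Nat.abs_cast]; ring

lemma summable_exp_quad (t R : ℝ) (ht : 0 < t) :
    Summable (fun k : ℤ => rexp (-t * (k : ℝ) ^ 2 + |(k : ℝ)| * R)) := by
  set B : ℝ := (R + 1) ^ 2 / (4 * t) with hB
  have hle : ∀ k : ℤ, rexp (-t * (k : ℝ) ^ 2 + |(k : ℝ)| * R) ≤ rexp B * rexp ((-1) * |(k : ℝ)|) := by
    intro k
    rw [← Real.exp_add]
    apply Real.exp_le_exp.mpr
    have hx : (0:ℝ) ≤ |(k : ℝ)| := abs_nonneg _
    have h2 : (k : ℝ) ^ 2 = |(k : ℝ)| ^ 2 := (_root_.sq_abs _).symm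
    rw [h2]
    set x := |(k : ℝ)|
    have hB' : B * (4 * t) = (R + 1) ^ 2 := div_mul_cancel₀ _ (by positivity)
    nlinarith [sq_nonneg (2 * t * x - (R + 1))]
  exact Summable.of_nonneg_of_le (fun k => (Real.exp_pos _).le) hle
    (((summable_exp_absk (-1) (by norm_num)).mul_left (rexp B)))

section helpers
variable [hT : Fact (0 < 2 * π)]

lemma fourierCoeff_lift (g : ℝ → ℂ) (k : ℤ) :
    fourierCoeff (AddCircle.liftIoc (2 * π) 0 g) k
      = (1 / (2 * π) : ℂ) * ∫ x in Set.Ioc (0:ℝ) (2*π), Complex.exp (Complex.I * (-k) * x) * g x := by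
  rw [fourierCoeff_eq_intervalIntegral _ k 0, zero_add]
  rw [intervalIntegral.integral_of_le (by linarith [hT.out] : (0:ℝ) ≤ 2*π)]
  rw [Complex.real_smul]
  push_cast
  congr 1
  refine setIntegral_congr_fun measurableSet_Ioc (fun x hx => ?_)
  have hx' : x ∈ Set.Ioc 0 (0 + 2*π) := by rwa [zero_add]
  rw [AddCircle.liftIoc_coe_apply hx', smul_eq_mul]
  congr 2
  rw [fourier_coe_apply]
  congr 1
  have hπ : (π:ℂ) ≠ 0 := Complex.ofReal_ne_zero.mpr Real.pi_ne_zero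
  push_cast
  field_simp

lemma memLp_liftIoc (g : ℝ → ℂ) (hgm : Measurable g)
    (hL2 : MemLp g 2 (volume.restrict (Set.Ioc 0 (2 * π)))) :
    MemLp (AddCircle.liftIoc (2 * π) 0 g) 2 (AddCircle.haarAddCircle) := by
  have hmAC : Measurable (AddCircle.liftIoc (2 * π) 0 g) :=
    (hgm.comp measurable_subtype_coe).comp (AddCircle.measurableEquivIoc (2*π) 0).measurable
  have hmp := AddCircle.measurePreserving_mk (2 * π) 0
  have hae : (fun x : ℝ => AddCircle.liftIoc (2*π) 0 g ↑x)
      =ᵐ[volume.restrict (Set.Ioc 0 (0 + 2*π))] g := by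
    filter_upwards [ae_restrict_mem measurableSet_Ioc] with x hx
    exact AddCircle.liftIoc_coe_apply hx
  have h1 : MemLp (fun x : ℝ => AddCircle.liftIoc (2*π) 0 g ↑x) 2
      (volume.restrict (Set.Ioc 0 (0 + 2*π))) := by
    rw [zero_add]
    refine hL2.ae_eq ?_
    rw [zero_add] at hae
    exact hae.symm
  have h2 : MemLp (AddCircle.liftIoc (2*π) 0 g) 2 (volume : Measure (AddCircle (2*π))) := by
    rw [← hmp.map_eq]
    exact (memLp_map_measure_iff hmAC.aestronglyMeasurable hmp.measurable.aemeasurable).mpr h1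
  rw [AddCircle.volume_eq_smul_haarAddCircle] at h2
  refine h2.mono_measure (Measure.le_iff.mpr fun s hs => ?_)
  simp only [Measure.smul_apply, smul_eq_mul]
  calc AddCircle.haarAddCircle s = 1 * AddCircle.haarAddCircle s := (one_mul _).symm
    _ ≤ ENNReal.ofReal (2*π) * AddCircle.haarAddCircle s := by
        gcongr
        rw [show (1:ℝ≥0∞) = ENNReal.ofReal 1 by simp]
        exact ENNReal.ofReal_le_ofReal (by linarith [Real.pi_gt_three])

lemma parseval_Ioc (g : ℝ → ℂ) (hgm : Measurable g)
    (hL2 : MemLp g 2 (volume.restrict (Set.Ioc 0 (2 * π)))) :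
    Summable (fun k : ℤ => ‖fourierCoeff (AddCircle.liftIoc (2 * π) 0 g) k‖ ^ 2) ∧
    2 * π * ∑' k : ℤ, ‖fourierCoeff (AddCircle.liftIoc (2 * π) 0 g) k‖ ^ 2
      = ∫ x in Set.Ioc (0:ℝ) (2 * π), ‖g x‖ ^ 2 := by
  have hmem := memLp_liftIoc g hgm hL2
  set gL2 := hmem.toLp _ with hgL2
  have haeq : (gL2 : AddCircle (2*π) → ℂ) =ᵐ[AddCircle.haarAddCircle] AddCircle.liftIoc (2*π) 0 g :=
    hmem.coeFn_toLp
  have hco : ∀ k : ℤ, fourierCoeff (gL2 : AddCircle (2*π) → ℂ) k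
      = fourierCoeff (AddCircle.liftIoc (2*π) 0 g) k := by
    intro k
    apply integral_congr_ae
    filter_upwards [haeq] with x hx
    rw [hx]
  constructor
  · have hmemlp : Memℓp (fourierBasis.repr gL2) 2 := lp.memℓp _
    have := (memℓp_gen_iff (by norm_num : (0:ℝ) < (2:ℝ≥0∞).toReal)).mp hmemlp
    refine this.congr (fun k => ?_)
    rw [fourierBasis_repr, hco k]
    rw [show ((2:ℝ≥0∞).toReal) = ((2:ℕ):ℝ) by norm_num, Real.rpow_natCast]
  · have hpars := tsum_sq_fourierCoeff gL2
    simp_rw [hco] at hpars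
    rw [hpars]
    have hint : ∫ u : AddCircle (2*π), ‖(gL2 : AddCircle (2*π) → ℂ) u‖^2 ∂AddCircle.haarAddCircle
        = ∫ u : AddCircle (2*π), ‖AddCircle.liftIoc (2*π) 0 g u‖^2 ∂AddCircle.haarAddCircle := by
      apply integral_congr_ae
      filter_upwards [haeq] with x hx
      rw [hx]
    rw [hint]
    have hvol : ∫ u : AddCircle (2*π), ‖AddCircle.liftIoc (2*π) 0 g u‖^2
        = (2*π) * ∫ u : AddCircle (2*π), ‖AddCircle.liftIoc (2*π) 0 g u‖^2 ∂AddCircle.haarAddCircle := by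
      rw [AddCircle.volume_eq_smul_haarAddCircle, integral_smul_measure,
        ENNReal.toReal_ofReal hT.out.le, smul_eq_mul]
    rw [← hvol]
    have hpre := AddCircle.integral_preimage (2*π) 0 (fun u => ‖AddCircle.liftIoc (2*π) 0 g u‖^2)
    rw [zero_add] at hpre
    rw [← hpre]
    refine setIntegral_congr_fun measurableSet_Ioc (fun x hx => ?_)
    have hx' : x ∈ Set.Ioc 0 (0 + 2*π) := by rwa [zero_add]
    rw [AddCircle.liftIoc_coe_apply hx']

end helpers

lemma two_pi_pos' : (0:ℝ) < 2 * π := by positivity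

lemma integral_exp_Ioc (m : ℤ) :
    ∫ x in Set.Ioc (0:ℝ) (2*π), Complex.exp (Complex.I * m * x)
      = if m = 0 then ((2*π:ℝ):ℂ) else 0 := by
  rw [← intervalIntegral.integral_of_le two_pi_pos'.le]
  by_cases hm : m = 0
  · simp [hm, Complex.ofReal_mul]
  · rw [if_neg hm]
    have hc : (Complex.I * m : ℂ) ≠ 0 :=
      mul_ne_zero Complex.I_ne_zero (Int.cast_ne_zero.mpr hm)
    have : ∀ x : ℝ, Complex.exp (Complex.I * m * x) = Complex.exp ((Complex.I * m) * x) := fun x => rfl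
    rw [integral_exp_mul_complex hc]
    have h1 : Complex.exp (Complex.I * m * ((2*π:ℝ):ℂ)) = 1 := by
      rw [show (Complex.I * m * ((2*π:ℝ):ℂ)) = (m : ℂ) * (2 * (π:ℂ) * Complex.I) by push_cast; ring]
      exact Complex.exp_int_mul_two_pi_mul_I m
    rw [h1]
    simp

lemma integral_tsum_Ioc (g : ℤ → ℝ → ℂ)
    (hgm : ∀ k, AEStronglyMeasurable (g k) (volume.restrict (Set.Ioc 0 (2*π))))
    (bound : ℤ → ℝ) (hb0 : ∀ k, 0 ≤ bound k)
    (hb : ∀ k x, x ∈ Set.Ioc (0:ℝ) (2*π) → ‖g k x‖ ≤ bound k)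
    (hsb : Summable bound) :
    ∫ x in Set.Ioc (0:ℝ) (2*π), ∑' k : ℤ, g k x = ∑' k : ℤ, ∫ x in Set.Ioc (0:ℝ) (2*π), g k x := by
  refine integral_tsum hgm ?_
  have hbk : ∀ k, ∫⁻ x in Set.Ioc (0:ℝ) (2*π), ‖g k x‖₊ ∂volume
      ≤ ENNReal.ofReal (bound k) * ENNReal.ofReal (2*π) := by
    intro k
    calc ∫⁻ x in Set.Ioc (0:ℝ) (2*π), (‖g k x‖₊ : ℝ≥0∞) ∂volume
        ≤ ∫⁻ _x in Set.Ioc (0:ℝ) (2*π), ENNReal.ofReal (bound k) ∂volume := by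
          refine setLIntegral_mono_ae (by fun_prop) ?_
          filter_upwards with x hx
          rw [← enorm_eq_nnnorm, ← ofReal_norm]
          exact ENNReal.ofReal_le_ofReal (hb k x hx)
      _ = ENNReal.ofReal (bound k) * ENNReal.ofReal (2*π) := by
          rw [setLIntegral_const]
          rw [Real.volume_Ioc]
          congr 1
          simp
  refine ne_of_lt (lt_of_le_of_lt (ENNReal.tsum_le_tsum hbk) ?_)
  rw [ENNReal.tsum_mul_right]
  apply ENNReal.mul_lt_top
  · rw [← ENNReal.ofReal_tsum_of_nonneg hb0 hsb]
    exact ENNReal.ofReal_lt_top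
  · exact ENNReal.ofReal_lt_top

section withT
variable [hT : Fact (0 < 2 * π)]

lemma fourierCoeff_of_series (c : ℤ → ℂ) (hc : Summable (fun k => ‖c k‖)) (k : ℤ) :
    fourierCoeff (AddCircle.liftIoc (2*π) 0
      (fun x : ℝ => ∑' n : ℤ, c n * Complex.exp (Complex.I * n * x))) k = c k := by
  rw [fourierCoeff_lift]
  have hsplit : ∀ x : ℝ, x ∈ Set.Ioc (0:ℝ) (2*π) →
      Complex.exp (Complex.I * (-k) * x) * (∑' n : ℤ, c n * Complex.exp (Complex.I * n * x))
        = ∑' n : ℤ, c n * Complex.exp (Complex.I * (n - k) * x) := by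
    intro x _
    rw [← tsum_mul_left]
    refine tsum_congr fun n => ?_
    have he : Complex.I * ((n:ℂ) - (k:ℂ)) * (x:ℂ) = Complex.I * (-k) * x + Complex.I * n * x := by
      push_cast; ring
    rw [he, Complex.exp_add]
    ring
  rw [setIntegral_congr_fun measurableSet_Ioc hsplit]
  rw [integral_tsum_Ioc _ (fun n => Continuous.aestronglyMeasurable (by continuity)) (fun n => ‖c n‖) (fun n => norm_nonneg _)
    (fun n x hx => ?_) hc]
  swap
  · rw [norm_mul]
    have : ‖Complex.exp (Complex.I * (n - k) * x)‖ = 1 := by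
      rw [Complex.norm_exp]
      have : (Complex.I * (n - k) * x).re = 0 := by simp
      rw [this, Real.exp_zero]
    rw [this, mul_one]
  have hterm : ∀ n : ℤ, ∫ x in Set.Ioc (0:ℝ) (2*π), c n * Complex.exp (Complex.I * (n - k) * x)
      = if n = k then (2*π:ℝ) * c n else 0 := by
    intro n
    rw [integral_const_mul]
    have := integral_exp_Ioc (n - k)
    push_cast at this
    rw [this]
    by_cases hn : n = k
    · rw [if_pos (by rw [hn]; ring), if_pos hn]
      push_cast
      ring
    · rw [if_neg (by intro hcon; apply hn; exact sub_eq_zero.mp (by exact_mod_cast hcon)), if_neg hn]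
      ring
  simp_rw [hterm]
  rw [tsum_eq_single k (fun n hn => if_neg hn)]
  rw [if_pos rfl]
  have hπ : ((2*π:ℝ):ℂ) ≠ 0 := by
    simp only [ne_eq, Complex.ofReal_eq_zero]
    positivity
  push_cast
  push_cast at hπ
  field_simp
end withT

lemma gaussian_shift (t : ℝ) (ht : 0 < t) (k : ℝ) :
    Integrable (fun y : ℝ => rexp (-(2*k)*y - y^2/(2*t))) ∧
    ∫ y : ℝ, rexp (-(2*k)*y - y^2/(2*t))
      = rexp (2*t*k^2) * ∫ y : ℝ, rexp (-(1/(2*t)) * y^2) := by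
  have hrw : ∀ y : ℝ, rexp (-(2*k)*y - y^2/(2*t))
      = rexp (2*t*k^2) * rexp (-(1/(2*t)) * (y + 2*t*k)^2) := by
    intro y
    rw [← Real.exp_add]
    congr 1
    field_simp
    ring
  have hbase : Integrable (fun y : ℝ => rexp (-(1/(2*t)) * y^2)) := by
    simpa using integrable_exp_neg_mul_sq (by positivity : (0:ℝ) < 1/(2*t))
  constructor
  · simp_rw [hrw]
    exact ((hbase.comp_add_right (2*t*k)).const_mul _)
  · simp_rw [hrw]
    rw [integral_const_mul]
    congr 1
    exact MeasureTheory.integral_add_right_eq_self (fun y => rexp (-(1/(2*t)) * y^2)) (2*t*k)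
lemma two_pi_posE : (0:ℝ) < 2 * π := by positivity

lemma periodic_intervalIntegrable (g : ℝ → ℂ) (hgp : ∀ x, g (x + 2*π) = g x)
    (hInt : IntegrableOn g (Set.Ioc 0 (2*π)) volume) (a : ℝ) :
    IntervalIntegrable g volume a (a + 2*π) := by
  have hper : Function.Periodic g (2*π) := hgp
  have base : IntervalIntegrable g volume 0 (2*π) :=
    (intervalIntegrable_iff_integrableOn_Ioc_of_le two_pi_posE.le).mpr hInt
  have step : ∀ n : ℤ, IntervalIntegrable g volume (2*π*n) (2*π*n + 2*π) := by
    intro n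
    have h1 := base.comp_sub_right (2*π*n)
    have h2 : (fun x => g (x - 2*π*n)) = g := by
      funext x
      have := (hper.int_mul (-n)) x
      simpa [mul_comm, sub_eq_add_neg] using this
    rw [h2] at h1
    rwa [zero_add, add_comm (2*π) (2*π*(n:ℝ))] at h1
  set n : ℤ := ⌊a / (2*π)⌋ with hn
  have hna : 2*π*n ≤ a := by
    rw [mul_comm]
    exact (le_div_iff₀ two_pi_posE).mp (Int.floor_le _)
  have hna' : a < 2*π*n + 2*π := by
    have h3 : a / (2*π) < (n:ℝ) + 1 := Int.lt_floor_add_one (a / (2*π))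
    have h4 : a < ((n:ℝ)+1)*(2*π) := (div_lt_iff₀ two_pi_posE).mp h3
    have h5 : ((n:ℝ)+1)*(2*π) = 2*π*(n:ℝ) + 2*π := by ring
    linarith
  have htrans : IntervalIntegrable g volume (2*π*n) (2*π*n + 2*π + 2*π) := by
    refine (step n).trans ?_
    have h6 := step (n+1)
    push_cast at h6
    rwa [show 2*π*((n:ℝ)+1) = 2*π*(n:ℝ) + 2*π by ring] at h6
  refine htrans.mono_set ?_
  rw [Set.uIcc_of_le (by linarith : a ≤ a + 2*π),
    Set.uIcc_of_le (by linarith : 2*π*n ≤ 2*π*n + 2*π + 2*π)]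
  exact Set.Icc_subset_Icc (by linarith) (by linarith)

lemma norm_coeff_term_le (a : ℂ) (M t : ℝ) (haM : ‖a‖ ≤ M) (k : ℤ) (z : ℂ) (R : ℝ)
    (hz : |z.im| ≤ R) :
    ‖a * ((rexp (-t*(k:ℝ)^2) : ℝ) : ℂ) * Complex.exp (Complex.I * k * z)‖
      ≤ M * rexp (-t*(k:ℝ)^2 + |(k:ℝ)| * R) := by
  rw [norm_mul, norm_mul]
  have h1 : ‖((rexp (-t*(k:ℝ)^2) : ℝ) : ℂ)‖ = rexp (-t*(k:ℝ)^2) := by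
    rw [Complex.norm_real, Real.norm_eq_abs, abs_of_pos (Real.exp_pos _)]
  have h2 : ‖Complex.exp (Complex.I * k * z)‖ ≤ rexp (|(k:ℝ)| * R) := by
    rw [Complex.norm_exp]
    apply Real.exp_le_exp.mpr
    have hre : (Complex.I * k * z).re = -((k:ℝ) * z.im) := by
      simp [Complex.mul_re, Complex.mul_im]
    rw [hre]
    calc -((k:ℝ) * z.im) ≤ |(k:ℝ) * z.im| := neg_le_abs _
      _ = |(k:ℝ)| * |z.im| := abs_mul _ _
      _ ≤ |(k:ℝ)| * R := by gcongr
  rw [h1, Real.exp_add]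
  have hM0 : (0:ℝ) ≤ M := (norm_nonneg a).trans haM
  calc ‖a‖ * rexp (-t*(k:ℝ)^2) * ‖Complex.exp (Complex.I * k * z)‖
      ≤ M * rexp (-t*(k:ℝ)^2) * rexp (|(k:ℝ)| * R) := by
        apply mul_le_mul _ h2 (norm_nonneg _) (by positivity)
        exact mul_le_mul_of_nonneg_right haM (Real.exp_pos _).le
    _ = M * (rexp (-t*(k:ℝ)^2) * rexp (|(k:ℝ)| * R)) := by ring

section withT2
variable [hT : Fact (0 < 2 * π)]

lemma fourierCoeff_lift' (g : ℝ → ℂ) (k : ℤ) :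
    fourierCoeff (AddCircle.liftIoc (2 * π) 0 g) k
      = (1 / (2 * π) : ℂ) * ∫ x in Set.Ioc (0:ℝ) (2*π), Complex.exp (Complex.I * (-k) * x) * g x :=
  fourierCoeff_lift g k

lemma coeff_bound (g : ℝ → ℂ) (hInt : Integrable g (volume.restrict (Set.Ioc 0 (2*π)))) (k : ℤ) :
    ‖fourierCoeff (AddCircle.liftIoc (2 * π) 0 g) k‖
      ≤ (1/(2*π)) * ∫ x in Set.Ioc (0:ℝ) (2*π), ‖g x‖ := by
  rw [fourierCoeff_lift']
  rw [norm_mul]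
  have h1 : ‖(1 / (2 * π) : ℂ)‖ = 1/(2*π) := by
    rw [show (1 / (2 * π) : ℂ) = ((1/(2*π) : ℝ) : ℂ) by push_cast; ring]
    rw [Complex.norm_real, Real.norm_eq_abs, abs_of_pos (by positivity : (0:ℝ) < 1/(2*π))]
  rw [h1]
  gcongr
  refine (norm_integral_le_integral_norm _).trans (le_of_eq ?_)
  refine setIntegral_congr_fun measurableSet_Ioc (fun x hx => ?_)
  rw [norm_mul]
  have : ‖Complex.exp (Complex.I * (-k) * x)‖ = 1 := by
    rw [Complex.norm_exp]
    have h0 : (Complex.I * -(k:ℂ) * (x:ℝ)).re = 0 := by simp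
    rw [h0, Real.exp_zero]
  rw [this, one_mul]
end withT2
section withT3
variable [hT : Fact (0 < 2 * π)]

lemma integral_tsum_Ioc2 (φ : ℝ → ℂ) (hφ : Integrable φ (volume.restrict (Set.Ioc 0 (2*π))))
    (g : ℤ → ℝ → ℂ)
    (hgm : ∀ k, AEStronglyMeasurable (g k) (volume.restrict (Set.Ioc 0 (2*π))))
    (bound : ℤ → ℝ) (hb0 : ∀ k, 0 ≤ bound k)
    (hb : ∀ k x, x ∈ Set.Ioc (0:ℝ) (2*π) → ‖g k x‖ ≤ bound k * ‖φ x‖)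
    (hsb : Summable bound) :
    ∫ x in Set.Ioc (0:ℝ) (2*π), ∑' k : ℤ, g k x
      = ∑' k : ℤ, ∫ x in Set.Ioc (0:ℝ) (2*π), g k x := by
  refine integral_tsum hgm ?_
  have hφ2 : ∫⁻ x in Set.Ioc (0:ℝ) (2*π), (‖φ x‖₊ : ℝ≥0∞) < ∞ := hφ.2
  have hbk : ∀ k, ∫⁻ x in Set.Ioc (0:ℝ) (2*π), (‖g k x‖₊ : ℝ≥0∞)
      ≤ ENNReal.ofReal (bound k) * ∫⁻ x in Set.Ioc (0:ℝ) (2*π), (‖φ x‖₊ : ℝ≥0∞) := by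
    intro k
    rw [← lintegral_const_mul' _ _ ENNReal.ofReal_ne_top]
    refine lintegral_mono_ae ?_
    filter_upwards [ae_restrict_mem measurableSet_Ioc] with x hx
    rw [← enorm_eq_nnnorm, ← enorm_eq_nnnorm, ← ofReal_norm, ← ofReal_norm,
      ← ENNReal.ofReal_mul (hb0 k)]
    exact ENNReal.ofReal_le_ofReal (hb k x hx)
  refine ne_of_lt (lt_of_le_of_lt (ENNReal.tsum_le_tsum hbk) ?_)
  rw [ENNReal.tsum_mul_right]
  apply ENNReal.mul_lt_top
  · rw [← ENNReal.ofReal_tsum_of_nonneg hb0 hsb]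
    exact ENNReal.ofReal_lt_top
  · exact hφ2
end withT3

set_option maxHeartbeats 1000000 in
/-- Segal–Bargmann characterization on `S¹` (one direction): if `h ∈ L²(S¹)` and
`f = h * p_t` with `t > 0`, then `f` extends to an entire 2π-periodic function `F` on ℂ with
`∫₀^{2π} ∫_ℝ |F(x+iy)|² q_{t/2}(y) dy dx < ∞`, where `q_s` is the Euclidean heat kernel. -/
theorem segal_bargmann_circle (t : ℝ) (ht : 0 < t)
    (h : ℝ → ℂ) (hmeas : Measurable h) (hper : ∀ x, h (x + 2 * π) = h x)
    (hL2 : MeasureTheory.MemLp h 2 (volume.restrict (Set.Ioc 0 (2 * π))))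
    (f : ℝ → ℂ)
    (hf : ∀ x : ℝ, f x = ((1 / (2 * π) : ℝ) : ℂ) * ∫ u in (0 : ℝ)..(2 * π),
      h (x - u) * ∑' k : ℤ,
        ((Real.exp (-t * (k : ℝ) ^ 2) : ℝ) : ℂ) * Complex.exp (Complex.I * k * u)) :
    ∃ F : ℂ → ℂ, Differentiable ℂ F ∧ (∀ z, F (z + 2 * π) = F z) ∧
      (∀ x : ℝ, F x = f x) ∧
      Integrable (fun q : ℝ × ℝ => ‖F (q.1 + q.2 * Complex.I)‖ ^ 2 *
          ((4 * π * (t / 2)) ^ (-(1 : ℝ) / 2) * Real.exp (-q.2 ^ 2 / (4 * (t / 2)))))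
        ((volume.restrict (Set.Ioc 0 (2 * π))).prod volume) := by
  haveI : Fact (0 < 2 * π) := ⟨two_pi_posE⟩
  haveI hfin : IsFiniteMeasure (volume.restrict (Set.Ioc (0:ℝ) (2*π))) :=
    ⟨by rw [Measure.restrict_apply_univ]; exact measure_Ioc_lt_top⟩
  have hInt : Integrable h (volume.restrict (Set.Ioc 0 (2 * π))) := hL2.integrable one_le_two
  set a : ℤ → ℂ := fun k => fourierCoeff (AddCircle.liftIoc (2*π) 0 h) k with ha
  set M : ℝ := (1/(2*π)) * ∫ x in Set.Ioc (0:ℝ) (2*π), ‖h x‖ with hM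
  have haM : ∀ k, ‖a k‖ ≤ M := fun k => coeff_bound h hInt k
  have hBessel : Summable (fun k : ℤ => ‖a k‖^2) := (parseval_Ioc h hmeas hL2).1
  set c : ℤ → ℂ := fun k => a k * ((rexp (-t*(k:ℝ)^2) : ℝ) : ℂ) with hc
  set F : ℂ → ℂ := fun z => ∑' k : ℤ, c k * Complex.exp (Complex.I * k * z) with hFdef
  have hterm_le : ∀ (R:ℝ) (z:ℂ), |z.im| ≤ R → ∀ k : ℤ,
      ‖c k * Complex.exp (Complex.I * k * z)‖ ≤ M * rexp (-t*(k:ℝ)^2 + |(k:ℝ)| * R) :=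
    fun R z hz k => norm_coeff_term_le (a k) M t (haM k) k z R hz
  have hsummable_norm : ∀ (R:ℝ) (z:ℂ), |z.im| ≤ R →
      Summable (fun k : ℤ => ‖c k * Complex.exp (Complex.I * k * z)‖) := fun R z hz =>
    Summable.of_nonneg_of_le (fun k => norm_nonneg _) (hterm_le R z hz)
      ((summable_exp_quad t R ht).mul_left M)
  have hsum : ∀ z : ℂ, Summable (fun k : ℤ => c k * Complex.exp (Complex.I * k * z)) :=
    fun z => (hsummable_norm |z.im| z le_rfl).of_norm
  -- Differentiability
  have hdiff : Differentiable ℂ F := by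
    intro z₀
    set R : ℝ := |z₀.im| + 1 with hR
    set u : ℤ → ℝ := fun k => M * rexp (-t*(k:ℝ)^2 + |(k:ℝ)| * (R+1)) with hu'
    have hu : Summable u := (summable_exp_quad t (R+1) ht).mul_left M
    have hmemball : ∀ z ∈ Metric.ball z₀ 1, |z.im| ≤ R := by
      intro z hz
      have h1 : |z.im - z₀.im| ≤ ‖z - z₀‖ := by
        simpa [Complex.sub_im] using Complex.abs_im_le_norm (z - z₀)
      have h2 : ‖z - z₀‖ < 1 := by rwa [Metric.mem_ball, Complex.dist_eq] at hz
      have h3 : |z.im| ≤ |z.im - z₀.im| + |z₀.im| := by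
        calc |z.im| = |(z.im - z₀.im) + z₀.im| := by ring_nf
          _ ≤ |z.im - z₀.im| + |z₀.im| := abs_add_le _ _
      rw [hR]; linarith
    have hderiv : ∀ (k : ℤ), ∀ z ∈ Metric.ball z₀ 1,
        HasDerivAt (fun z => c k * Complex.exp (Complex.I * k * z))
          (c k * Complex.exp (Complex.I * k * z) * (Complex.I * k)) z := by
      intro k z _
      have h1 : HasDerivAt (fun z : ℂ => Complex.I * k * z) (Complex.I * k) z := by
        simpa using (hasDerivAt_id z).const_mul (Complex.I * (k:ℂ))
      have h3 := h1.cexp.const_mul (c k)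
      rw [mul_assoc]
      exact h3
    have hbound : ∀ (k : ℤ), ∀ z ∈ Metric.ball z₀ 1,
        ‖c k * Complex.exp (Complex.I * k * z) * (Complex.I * k)‖ ≤ u k := by
      intro k z hz
      rw [norm_mul]
      have h1 : ‖Complex.I * (k:ℂ)‖ = |(k:ℝ)| := by
        rw [norm_mul, Complex.norm_I, one_mul, Complex.norm_intCast]
      rw [h1]
      have h2 := hterm_le R z (hmemball z hz) k
      have h4 : |(k:ℝ)| ≤ rexp (|(k:ℝ)|) := by
        have := Real.add_one_le_exp (|(k:ℝ)|); linarith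
      calc ‖c k * Complex.exp (Complex.I * k * z)‖ * |(k:ℝ)|
          ≤ (M * rexp (-t*(k:ℝ)^2 + |(k:ℝ)| * R)) * rexp (|(k:ℝ)|) := by
            apply mul_le_mul h2 h4 (abs_nonneg _) (by positivity)
        _ = u k := by
            rw [hu']
            rw [mul_assoc, ← Real.exp_add]
            congr 2
            ring
    exact (hasDerivAt_tsum_of_isPreconnected hu Metric.isOpen_ball
      (convex_ball z₀ 1).isPreconnected hderiv hbound (Metric.mem_ball_self one_pos)
      (hsum z₀) (Metric.mem_ball_self one_pos)).differentiableAt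
  -- Periodicity
  have hper2 : ∀ z : ℂ, F (z + 2*π) = F z := by
    intro z
    apply tsum_congr; intro k
    have harg : Complex.I * k * (z + 2*(π:ℂ)) = Complex.I * k * z + (k:ℂ) * (2*(π:ℂ)*Complex.I) := by
      ring
    rw [harg, Complex.exp_add, Complex.exp_int_mul_two_pi_mul_I, mul_one]
  -- F = f on ℝ
  have hFf : ∀ x : ℝ, F x = f x := by
    intro x
    rw [hf x]
    have hφInt : Integrable (fun u : ℝ => h (x - u)) (volume.restrict (Set.Ioc 0 (2*π))) := by
      have hI := periodic_intervalIntegrable h hper hInt (x - 2*π)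
      rw [show x - 2*π + 2*π = x by ring] at hI
      have hI2 := hI.comp_sub_left x
      rw [show x - (x - 2*π) = 2*π by ring, sub_self] at hI2
      exact (intervalIntegrable_iff_integrableOn_Ioc_of_le two_pi_posE.le).mp hI2.symm
    have hker_norm : ∀ (k : ℤ) (u : ℝ),
        ‖((rexp (-t*(k:ℝ)^2) : ℝ) : ℂ) * Complex.exp (Complex.I * k * u)‖ = rexp (-t*(k:ℝ)^2) := by
      intro k u
      rw [norm_mul, Complex.norm_real, Real.norm_eq_abs, abs_of_pos (Real.exp_pos _)]
      have : ‖Complex.exp (Complex.I * k * (u:ℝ))‖ = 1 := by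
        rw [Complex.norm_exp]
        have : (Complex.I * (k:ℂ) * (u:ℝ)).re = 0 := by simp
        rw [this, Real.exp_zero]
      rw [this, mul_one]
    have hswap : ∫ u in Set.Ioc (0:ℝ) (2*π), h (x - u) * ∑' k : ℤ,
          ((rexp (-t*(k:ℝ)^2) : ℝ) : ℂ) * Complex.exp (Complex.I * k * u)
        = ∑' k : ℤ, ∫ u in Set.Ioc (0:ℝ) (2*π),
            h (x - u) * (((rexp (-t*(k:ℝ)^2) : ℝ) : ℂ) * Complex.exp (Complex.I * k * u)) := by
      rw [setIntegral_congr_fun measurableSet_Ioc (g := fun u => ∑' k : ℤ,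
        h (x - u) * (((rexp (-t*(k:ℝ)^2) : ℝ) : ℂ) * Complex.exp (Complex.I * k * u)))
        (fun u _ => tsum_mul_left.symm)]
      refine integral_tsum_Ioc2 (fun u => h (x - u)) hφInt _
        (fun k => ((hmeas.comp (measurable_const.sub measurable_id)).aestronglyMeasurable.mul
          (Continuous.aestronglyMeasurable (by continuity))))
        (fun k => rexp (-t*(k:ℝ)^2)) (fun k => (Real.exp_pos _).le) (fun k u _ => ?_)
        ((summable_exp_quad t 0 ht).congr (fun k => by rw [mul_zero, add_zero]))
      · rw [norm_mul, hker_norm k u, mul_comm]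
    rw [intervalIntegral.integral_of_le two_pi_posE.le, hswap]
    have hstep : ∀ k : ℤ, ∫ u in Set.Ioc (0:ℝ) (2*π),
        h (x - u) * (((rexp (-t*(k:ℝ)^2) : ℝ) : ℂ) * Complex.exp (Complex.I * k * u))
        = ((2*π:ℝ):ℂ) * (c k * Complex.exp (Complex.I * k * (x:ℂ))) := by
      intro k
      rw [← intervalIntegral.integral_of_le two_pi_posE.le]
      have hfun : ∀ u : ℝ,
          h (x - u) * (((rexp (-t*(k:ℝ)^2) : ℝ) : ℂ) * Complex.exp (Complex.I * k * u))
          = ((rexp (-t*(k:ℝ)^2) : ℝ) : ℂ) * Complex.exp (Complex.I * k * (x:ℂ)) *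
            ((fun v : ℝ => h v * Complex.exp (Complex.I * (-k) * v)) (x - u)) := by
        intro u
        simp only
        have key : Complex.exp (Complex.I * k * (x:ℂ)) * Complex.exp (Complex.I * (-k) * ((x - u : ℝ):ℂ))
            = Complex.exp (Complex.I * k * (u:ℝ)) := by
          rw [← Complex.exp_add]
          congr 1
          push_cast
          ring
        calc h (x - u) * (((rexp (-t*(k:ℝ)^2) : ℝ) : ℂ) * Complex.exp (Complex.I * k * (u:ℝ)))
            = h (x - u) * (((rexp (-t*(k:ℝ)^2) : ℝ) : ℂ) *
              (Complex.exp (Complex.I * k * (x:ℂ)) * Complex.exp (Complex.I * (-k) * ((x - u : ℝ):ℂ)))) := by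
              rw [key]
          _ = ((rexp (-t*(k:ℝ)^2) : ℝ) : ℂ) * Complex.exp (Complex.I * k * (x:ℂ)) *
              (h (x - u) * Complex.exp (Complex.I * (-k) * ((x - u : ℝ):ℂ))) := by ring
      rw [intervalIntegral.integral_congr (fun u _ => hfun u)]
      rw [intervalIntegral.integral_const_mul]
      rw [intervalIntegral.integral_comp_sub_left
        (fun v : ℝ => h v * Complex.exp (Complex.I * (-k) * v)) x]
      have hperφ : Function.Periodic (fun v : ℝ => h v * Complex.exp (Complex.I * (-k) * v)) (2*π) := by
        intro v
        simp only
        rw [hper v]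
        congr 1
        rw [show Complex.I * (-(k:ℂ)) * ((v + 2*π : ℝ):ℂ)
            = Complex.I * (-(k:ℂ)) * (v:ℂ) + ((-k : ℤ):ℂ) * (2*(π:ℂ)*Complex.I) by push_cast; ring]
        rw [Complex.exp_add, Complex.exp_int_mul_two_pi_mul_I, mul_one]
      have hshift := hperφ.intervalIntegral_add_eq (x - 2*π) 0
      rw [show x - 2*π + 2*π = x by ring, zero_add] at hshift
      rw [sub_zero, hshift]
      rw [intervalIntegral.integral_of_le two_pi_posE.le]
      have hcomm : ∫ v in Set.Ioc (0:ℝ) (2*π), h v * Complex.exp (Complex.I * (-k) * v)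
          = ∫ v in Set.Ioc (0:ℝ) (2*π), Complex.exp (Complex.I * (-k) * v) * h v :=
        setIntegral_congr_fun measurableSet_Ioc (fun v _ => mul_comm _ _)
      rw [hcomm]
      have hπc : (π:ℂ) ≠ 0 := Complex.ofReal_ne_zero.mpr Real.pi_ne_zero
      have hval : ∫ v in Set.Ioc (0:ℝ) (2*π), Complex.exp (Complex.I * (-k) * v) * h v
          = ((2*π:ℝ):ℂ) * a k := by
        rw [ha]
        simp only
        rw [fourierCoeff_lift h k, ← mul_assoc]
        rw [show ((2*π:ℝ):ℂ) * (1 / (2 * π) : ℂ) = 1 by push_cast; field_simp]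
        rw [one_mul]
      rw [hval, hc]
      simp only
      ring
    rw [show (∑' k : ℤ, ∫ u in Set.Ioc (0:ℝ) (2*π),
        h (x - u) * (((rexp (-t*(k:ℝ)^2) : ℝ) : ℂ) * Complex.exp (Complex.I * k * u)))
      = ∑' k : ℤ, ((2*π:ℝ):ℂ) * (c k * Complex.exp (Complex.I * k * (x:ℂ))) from tsum_congr hstep]
    rw [tsum_mul_left, ← mul_assoc]
    have hπc : (π:ℂ) ≠ 0 := Complex.ofReal_ne_zero.mpr Real.pi_ne_zero
    rw [show ((1/(2*π):ℝ):ℂ) * ((2*π:ℝ):ℂ) = 1 by push_cast; field_simp]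
    rw [one_mul]
  -- Integrability
  refine ⟨F, hdiff, hper2, hFf, ?_⟩
  set Qc : ℝ := (4 * π * (t / 2)) ^ (-(1 : ℝ) / 2) with hQcdef
  have hQc0 : 0 ≤ Qc := Real.rpow_nonneg (by positivity) _
  have hFc : Continuous F := hdiff.continuous
  set G : ℝ × ℝ → ℝ := fun q => ‖F (q.1 + q.2 * Complex.I)‖ ^ 2 *
    (Qc * Real.exp (-q.2 ^ 2 / (4 * (t / 2)))) with hGdef
  have hG0 : ∀ q : ℝ × ℝ, 0 ≤ G q :=
    fun q => mul_nonneg (by positivity) (mul_nonneg hQc0 (Real.exp_pos _).le)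
  have hGc : Continuous G := by
    rw [hGdef]
    apply Continuous.mul
    · refine (hFc.comp ?_).norm.pow 2
      exact (Complex.continuous_ofReal.comp continuous_fst).add
        ((Complex.continuous_ofReal.comp continuous_snd).mul continuous_const)
    · refine continuous_const.mul (Real.continuous_exp.comp ?_)
      exact ((continuous_snd.pow 2).neg).div_const _
  have hunit : ∀ (n : ℤ) (x : ℝ), ‖Complex.exp (Complex.I * n * (x:ℂ))‖ = 1 := by
    intro n x
    rw [Complex.norm_exp]
    have : (Complex.I * (n:ℂ) * (x:ℝ)).re = 0 := by simp
    rw [this, Real.exp_zero]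
  have hyI_im : ∀ y : ℝ, |((y:ℂ) * Complex.I).im| ≤ |y| := by
    intro y; simp
  have hcySummable : ∀ y : ℝ,
      Summable (fun n : ℤ => ‖c n * Complex.exp (Complex.I * n * ((y:ℂ) * Complex.I))‖) :=
    fun y => hsummable_norm |y| ((y:ℂ) * Complex.I) (hyI_im y)
  have hgy_eq : ∀ (y x : ℝ), F ((x:ℂ) + (y:ℂ) * Complex.I)
      = ∑' n : ℤ, (c n * Complex.exp (Complex.I * n * ((y:ℂ) * Complex.I))) *
          Complex.exp (Complex.I * n * (x:ℂ)) := by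
    intro y x
    apply tsum_congr; intro n
    rw [mul_assoc (c n), ← Complex.exp_add]
    congr 2
    ring
  have hcy_sq : ∀ (y : ℝ) (n : ℤ),
      ‖c n * Complex.exp (Complex.I * n * ((y:ℂ) * Complex.I))‖ ^ 2
        = ‖c n‖ ^ 2 * rexp (-(2*(n:ℝ))*y) := by
    intro y n
    rw [norm_mul, mul_pow]
    congr 1
    rw [Complex.norm_exp]
    have hre : (Complex.I * (n:ℂ) * ((y:ℂ) * Complex.I)).re = -((n:ℝ)*y) := by simp
    rw [hre, sq, ← Real.exp_add]
    congr 1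
    ring
  have hgym : ∀ y : ℝ, Measurable (fun x : ℝ => F ((x:ℂ) + (y:ℂ) * Complex.I)) :=
    fun y => (hFc.comp (Complex.continuous_ofReal.add continuous_const)).measurable
  have hgyL2 : ∀ y : ℝ, MemLp (fun x : ℝ => F ((x:ℂ) + (y:ℂ) * Complex.I)) 2
      (volume.restrict (Set.Ioc 0 (2*π))) := by
    intro y
    refine MemLp.of_bound (hgym y).aestronglyMeasurable
      (∑' n : ℤ, ‖c n * Complex.exp (Complex.I * n * ((y:ℂ) * Complex.I))‖) ?_
    refine Filter.Eventually.of_forall fun x => ?_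
    rw [hgy_eq y x]
    have hsum2 : Summable (fun n : ℤ => ‖(c n * Complex.exp (Complex.I * n * ((y:ℂ) * Complex.I))) *
        Complex.exp (Complex.I * n * (x:ℂ))‖) :=
      (hcySummable y).congr fun n => by
        rw [norm_mul (c n * Complex.exp (Complex.I * n * ((y:ℂ) * Complex.I)))
          (Complex.exp (Complex.I * n * (x:ℂ))), hunit n x, mul_one]
    refine (norm_tsum_le_tsum_norm hsum2).trans (le_of_eq (tsum_congr fun n => ?_))
    rw [norm_mul (c n * Complex.exp (Complex.I * n * ((y:ℂ) * Complex.I)))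
      (Complex.exp (Complex.I * n * (x:ℂ))), hunit n x, mul_one]
  have hpars : ∀ y : ℝ, Summable (fun k : ℤ => ‖c k‖ ^ 2 * rexp (-(2*(k:ℝ))*y)) ∧
      2*π * ∑' k : ℤ, ‖c k‖ ^ 2 * rexp (-(2*(k:ℝ))*y)
        = ∫ x in Set.Ioc (0:ℝ) (2*π), ‖F ((x:ℂ) + (y:ℂ) * Complex.I)‖ ^ 2 := by
    intro y
    have hlift : AddCircle.liftIoc (2*π) 0 (fun x : ℝ => F ((x:ℂ) + (y:ℂ) * Complex.I))
        = AddCircle.liftIoc (2*π) 0 (fun x : ℝ => ∑' n : ℤ,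
            (c n * Complex.exp (Complex.I * n * ((y:ℂ) * Complex.I))) *
              Complex.exp (Complex.I * n * x)) := by
      rw [show (fun x : ℝ => F ((x:ℂ) + (y:ℂ) * Complex.I)) = (fun x : ℝ => ∑' n : ℤ,
        (c n * Complex.exp (Complex.I * n * ((y:ℂ) * Complex.I))) *
          Complex.exp (Complex.I * n * (x:ℂ))) from funext (hgy_eq y)]
    have hfc : ∀ k : ℤ, fourierCoeff
        (AddCircle.liftIoc (2*π) 0 (fun x : ℝ => F ((x:ℂ) + (y:ℂ) * Complex.I))) k
        = c k * Complex.exp (Complex.I * k * ((y:ℂ) * Complex.I)) := by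
      intro k
      rw [hlift]
      exact fourierCoeff_of_series _ (hcySummable y) k
    have hp := parseval_Ioc (fun x : ℝ => F ((x:ℂ) + (y:ℂ) * Complex.I)) (hgym y) (hgyL2 y)
    constructor
    · refine hp.1.congr fun k => ?_
      rw [hfc k, hcy_sq y k]
    · rw [← hp.2]
      congr 1
      refine tsum_congr fun k => ?_
      rw [hfc k, hcy_sq y k]
  have hGyInt : ∀ y : ℝ, Integrable (fun x : ℝ => G (x, y))
      (volume.restrict (Set.Ioc 0 (2*π))) := by
    intro y
    have hcont : Continuous (fun x : ℝ => G (x, y)) :=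
      hGc.comp (continuous_id.prodMk continuous_const)
    exact hcont.integrableOn_Ioc
  set Ψ : ℤ → ℝ → ℝ := fun k y =>
    (2*π*Qc) * (‖c k‖ ^ 2 * rexp (-(2*(k:ℝ))*y - y^2/(2*t))) with hΨdef
  have hΨ0 : ∀ (k : ℤ) (y : ℝ), 0 ≤ Ψ k y :=
    fun k y => mul_nonneg (by positivity) (mul_nonneg (sq_nonneg _) (Real.exp_pos _).le)
  have hexp' : ∀ y : ℝ, rexp (-y^2/(4*(t/2))) = rexp (-(2*(0:ℝ))*y - y^2/(2*t)) := by
    intro y; congr 1; ring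
  have hΨsum : ∀ y : ℝ, Summable (fun k : ℤ => Ψ k y) := by
    intro y
    refine (((hpars y).1.mul_right (rexp (-(y^2/(2*t))))).mul_left (2*π*Qc)).congr fun k => ?_
    rw [hΨdef]
    simp only
    rw [show -(2*(k:ℝ))*y - y^2/(2*t) = -(2*(k:ℝ))*y + -(y^2/(2*t)) by ring, Real.exp_add]
    ring
  have hInner : ∀ y : ℝ, ∫ x, G (x, y) ∂(volume.restrict (Set.Ioc 0 (2*π)))
      = ∑' k : ℤ, Ψ k y := by
    intro y
    have h1 : (fun x : ℝ => G (x, y)) = fun x : ℝ =>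
        ‖F ((x:ℂ) + (y:ℂ) * Complex.I)‖ ^ 2 * (Qc * rexp (-y^2/(4*(t/2)))) := rfl
    rw [h1, integral_mul_const, ← (hpars y).2]
    rw [mul_comm (2*π) _, mul_assoc, ← tsum_mul_right]
    refine tsum_congr fun k => ?_
    rw [hΨdef]
    simp only
    rw [show -(2*(k:ℝ))*y - y^2/(2*t) = -(2*(k:ℝ))*y + -(y^2/(2*t)) by ring, Real.exp_add,
      show (-y^2/(4*(t/2))) = -(y^2/(2*t)) by ring]
    ring
  set Cg : ℝ := ∫ y : ℝ, rexp (-(1/(2*t)) * y^2) with hCgdef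
  have hΨint : ∀ k : ℤ, Integrable (fun y => Ψ k y) volume := by
    intro k
    exact (((gaussian_shift t ht (k:ℝ)).1.const_mul (‖c k‖ ^ 2)).const_mul (2*π*Qc))
  have hΨval : ∀ k : ℤ, ∫ y : ℝ, Ψ k y = (2*π*Qc*Cg) * ‖a k‖ ^ 2 := by
    intro k
    rw [hΨdef]
    simp only
    rw [integral_const_mul, integral_const_mul, (gaussian_shift t ht (k:ℝ)).2]
    have hck : ‖c k‖ = ‖a k‖ * rexp (-t*(k:ℝ)^2) := by
      rw [hc]
      simp only
      rw [norm_mul, Complex.norm_real, Real.norm_eq_abs, abs_of_pos (Real.exp_pos _)]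
    rw [hck]
    have hee : rexp (-t*(k:ℝ)^2) ^ 2 * rexp (2*t*(k:ℝ)^2) = 1 := by
      rw [sq, ← Real.exp_add, ← Real.exp_add,
        show -t*(k:ℝ)^2 + -t*(k:ℝ)^2 + 2*t*(k:ℝ)^2 = 0 by ring, Real.exp_zero]
    have expand : (‖a k‖ * rexp (-t*(k:ℝ)^2)) ^ 2 = ‖a k‖ ^ 2 * rexp (-t*(k:ℝ)^2) ^ 2 := by ring
    rw [expand]
    linear_combination (2*π*Qc*‖a k‖^2*Cg) * hee
  refine ⟨hGc.aestronglyMeasurable, ?_⟩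
  rw [hasFiniteIntegral_iff_ofReal (Filter.Eventually.of_forall hG0)]
  have hmeasG : AEMeasurable (fun q : ℝ × ℝ => ENNReal.ofReal (G q))
      ((volume.restrict (Set.Ioc (0:ℝ) (2*π))).prod volume) :=
    (ENNReal.measurable_ofReal.comp hGc.measurable).aemeasurable
  rw [lintegral_prod_symm _ hmeasG]
  calc (∫⁻ y, ∫⁻ x, ENNReal.ofReal (G (x, y)) ∂(volume.restrict (Set.Ioc (0:ℝ) (2*π))) ∂volume)
      = ∫⁻ y, ∑' k : ℤ, ENNReal.ofReal (Ψ k y) ∂volume := by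
        refine lintegral_congr fun y => ?_
        rw [← ofReal_integral_eq_lintegral_ofReal (hGyInt y)
          (Filter.Eventually.of_forall fun x => hG0 (x, y))]
        rw [hInner y, ENNReal.ofReal_tsum_of_nonneg (fun k => hΨ0 k y) (hΨsum y)]
    _ = ∑' k : ℤ, ∫⁻ y, ENNReal.ofReal (Ψ k y) ∂volume := by
        refine lintegral_tsum fun k => ?_
        refine (ENNReal.measurable_ofReal.comp (Continuous.measurable ?_)).aemeasurable
        rw [hΨdef]
        refine continuous_const.mul (continuous_const.mul (Real.continuous_exp.comp ?_))
        exact ((continuous_const.mul continuous_id).sub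
          ((continuous_id.pow 2).div_const _))
    _ = ∑' k : ℤ, ENNReal.ofReal ((2*π*Qc*Cg) * ‖a k‖ ^ 2) := by
        refine tsum_congr fun k => ?_
        rw [← ofReal_integral_eq_lintegral_ofReal (hΨint k)
          (Filter.Eventually.of_forall fun y => hΨ0 k y), hΨval k]
    _ < ⊤ := by
        have hD0 : 0 ≤ 2*π*Qc*Cg := by
          have : 0 ≤ Cg := by
            rw [hCgdef]
            exact integral_nonneg fun y => (Real.exp_pos _).le
          positivity
        have h1 : ∀ k : ℤ, ENNReal.ofReal ((2*π*Qc*Cg) * ‖a k‖ ^ 2)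
            = ENNReal.ofReal (2*π*Qc*Cg) * ENNReal.ofReal (‖a k‖ ^ 2) :=
          fun k => ENNReal.ofReal_mul hD0
        simp_rw [h1]
        rw [ENNReal.tsum_mul_left, ← ENNReal.ofReal_tsum_of_nonneg (fun k => sq_nonneg _) hBessel]
        exact ENNReal.mul_lt_top ENNReal.ofReal_lt_top ENNReal.ofReal_lt_top
end
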